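/- Let V be a finite-dimensional real vector space and Q a nondegenerate quadratic form on V. Let M be a finite-dimensional Cℓ(Q)-module and h a nondegenerate bilinear form on M. If S₊, S₋ ⊆ M are linear subspaces with 2·(dim S₊ + dim S₋) > 3·dim M, then the only vector v ∈ V satisfying h(γ_v s, t) = 0 for all s ∈ S₊ and t ∈ S₋ is v = 0. (This is the algebraic core of Theorem 2.1 (iv): if k₊ + k₋ > (3/2)N for the spaces spanned by Killing spinors with Killing numbers ±λ, then the bracket map onto the tangent space is surjective.) -/

import Mathlib

/-- The Clifford multiplication `γ_v : s ↦ ι(v) • s` as an `ℝ`-linear endomorphism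
of a `Cℓ(Q)`-module `M`. -/
noncomputable def gammaLin {V : Type*} [AddCommGroup V] [Module ℝ V]
    (Q : QuadraticForm ℝ V) {M : Type*} [AddCommGroup M] [Module ℝ M]
    [Module (CliffordAlgebra Q) M] [IsScalarTower ℝ (CliffordAlgebra Q) M]
    (v : V) : M →ₗ[ℝ] M where
  toFun s := CliffordAlgebra.ι Q v • s
  map_add' s t := smul_add _ s t
  map_smul' r s := (smul_comm r (CliffordAlgebra.ι Q v) s).symm

lemma gammaLin_apply {V : Type*} [AddCommGroup V] [Module ℝ V]
    (Q : QuadraticForm ℝ V) {M : Type*} [AddCommGroup M] [Module ℝ M]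
    [Module (CliffordAlgebra Q) M] [IsScalarTower ℝ (CliffordAlgebra Q) M]
    (v : V) (s : M) : gammaLin Q v s = CliffordAlgebra.ι Q v • s := rfl

/-- `γ_v ∘ γ_v = Q v • id`. -/
lemma gammaLin_sq {V : Type*} [AddCommGroup V] [Module ℝ V]
    (Q : QuadraticForm ℝ V) {M : Type*} [AddCommGroup M] [Module ℝ M]
    [Module (CliffordAlgebra Q) M] [IsScalarTower ℝ (CliffordAlgebra Q) M]
    (v : V) (s : M) : gammaLin Q v (gammaLin Q v s) = Q v • s := by
  rw [gammaLin_apply, gammaLin_apply, ← mul_smul, CliffordAlgebra.ι_sq_scalar,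
    algebraMap_smul]

/-- The image of a submodule has rank at least `rank S - dim ker f`. -/
lemma finrank_le_finrank_map_add_finrank_ker {K M : Type*} [Field K] [AddCommGroup M]
    [Module K M] [FiniteDimensional K M] (f : M →ₗ[K] M) (S : Submodule K M) :
    Module.finrank K S ≤ Module.finrank K (S.map f) + Module.finrank K (LinearMap.ker f) := by
  have h1 : LinearMap.range (f.comp S.subtype) = S.map f := by
    rw [LinearMap.range_comp, Submodule.range_subtype]
  have h2 := LinearMap.finrank_range_add_finrank_ker (f.comp S.subtype)
  have h3 : Module.finrank K (LinearMap.ker (f.comp S.subtype)) ≤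
      Module.finrank K (LinearMap.ker f) := by
    rw [← Submodule.finrank_map_subtype_eq S (LinearMap.ker (f.comp S.subtype))]
    apply Submodule.finrank_mono
    rintro x ⟨⟨y, hy⟩, hyk, rfl⟩
    simpa using hyk
  rw [h1] at h2
  omega

/-- For a nondegenerate quadratic form `Q`, if `S₊, S₋` are subspaces of a Clifford
module `M` with `dim S₊ + dim S₋ > (3/2) dim M` and `h` is a nondegenerate bilinear
form on `M`, then the only vector `v` with `h(γ_v S₊, S₋) = 0` is `v = 0`. -/
theorem killing_spinors_two_numbers
    {V : Type*} [AddCommGroup V] [Module ℝ V] [FiniteDimensional ℝ V]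
    (Q : QuadraticForm ℝ V) (hQ : (QuadraticMap.polarBilin Q).Nondegenerate)
    {M : Type*} [AddCommGroup M] [Module ℝ M] [FiniteDimensional ℝ M]
    [Module (CliffordAlgebra Q) M] [IsScalarTower ℝ (CliffordAlgebra Q) M]
    (h : LinearMap.BilinForm ℝ M) (hh : h.Nondegenerate)
    (Splus Sminus : Submodule ℝ M)
    (hdim : 3 * Module.finrank ℝ M <
      2 * (Module.finrank ℝ Splus + Module.finrank ℝ Sminus))
    (v : V)
    (hv : ∀ s ∈ Splus, ∀ t ∈ Sminus, h (gammaLin Q v s) t = 0) :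
    v = 0 := by
  by_contra hv0
  set γ : M →ₗ[ℝ] M := gammaLin Q v with hγ
  set N := Module.finrank ℝ M with hN
  -- Step 1: `dim (γ S₊) + dim S₋ ≤ N` via the dual pairing.
  set φ : M →ₗ[ℝ] Module.Dual ℝ Sminus := (Sminus.subtype.dualMap).comp h with hφ
  have hφsurj : Function.Surjective φ := by
    apply (LinearMap.dualMap_surjective_of_injective Sminus.injective_subtype).comp
    intro f
    exact ⟨(h.toDual hh).symm f, by ext x; simp⟩
  have hsub : Splus.map γ ≤ LinearMap.ker φ := by
    rintro _ ⟨s, hs, rfl⟩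
    ext ⟨t, ht⟩
    exact hv s hs t ht
  have hkerφ : Module.finrank ℝ (LinearMap.ker φ) + Module.finrank ℝ Sminus = N := by
    have h2 := LinearMap.finrank_range_add_finrank_ker φ
    rw [LinearMap.range_eq_top.mpr hφsurj, finrank_top, Subspace.dual_finrank_eq] at h2
    omega
  have step1 : Module.finrank ℝ (Splus.map γ) + Module.finrank ℝ Sminus ≤ N := by
    have := Submodule.finrank_mono hsub
    omega
  -- Step 2: rank-nullity estimate for the image of `S₊`.
  have step2 := finrank_le_finrank_map_add_finrank_ker γ Splus
  -- Step 3: bound `dim ker γ`.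
  by_cases hQv : Q v = 0
  · -- null case: `ker γ = range γ`, so `2 dim ker γ = N`.
    obtain ⟨w, hw⟩ : ∃ w, QuadraticMap.polar Q v w ≠ 0 := by
      by_contra hcon
      push_neg at hcon
      exact hv0 (hQ.1 v (fun n => by simpa using hcon n))
    set c := QuadraticMap.polar Q v w with hc
    have hanti : ∀ s : M, gammaLin Q v (gammaLin Q w s) + gammaLin Q w (gammaLin Q v s)
        = c • s := by
      intro s
      simp only [gammaLin_apply, ← mul_smul, ← add_smul,
        CliffordAlgebra.ι_mul_ι_add_swap, algebraMap_smul]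
      rfl
    have hkr : LinearMap.ker γ = LinearMap.range γ := by
      apply le_antisymm
      · intro s hs
        have hs0 : γ s = 0 := hs
        have := hanti s
        rw [hs0, map_zero, add_zero] at this
        exact ⟨c⁻¹ • gammaLin Q w s, by rw [map_smul, this, smul_smul, inv_mul_cancel₀ hw,
          one_smul]⟩
      · rintro _ ⟨s, rfl⟩
        show γ (γ s) = 0
        rw [hγ, gammaLin_sq, hQv, zero_smul]
    have h2 := LinearMap.finrank_range_add_finrank_ker γ
    rw [← hkr] at h2
    omega
  · -- invertible case: `γ` is injective.
    have hker : LinearMap.ker γ = ⊥ := by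
      rw [LinearMap.ker_eq_bot']
      intro s hs
      have : γ (γ s) = 0 := by rw [hs, map_zero]
      rw [hγ, gammaLin_sq] at this
      have := smul_eq_zero.mp this
      tauto
    rw [hker, finrank_bot] at step2
    have hle : Module.finrank ℝ (Splus.map γ) ≤ N := Submodule.finrank_le _
    omega
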